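/- In a monotonous quiver, phylogeneticity is anti-hereditary: if B is a phylogenetic vertex and A is an ancestor of B (i.e. A ≤ B), then A is phylogenetic. -/

import Mathlib

universe u
variable {V : Type u} [Quiver V]

/-- An evolution of length `m` with vertex sequence `A 0, A 1, ..., A m`:
for each `k < m` there is an edge from `A (k+1)` to `A k`
(the paper's evolution `A 0 ← A 1 ← ⋯ ← A m`). -/
def IsEvol (A : ℕ → V) (m : ℕ) : Prop := ∀ k < m, Nonempty (A (k + 1) ⟶ A k)

/-- `Anc X Y` : `X` is an ancestor of `Y`, i.e. there is an evolution from `X` to `Y`. -/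
def Anc (X Y : V) : Prop := ∃ (m : ℕ) (A : ℕ → V), IsEvol A m ∧ A 0 = X ∧ A m = Y

/-- `X` and `Y` are isotypic. -/
def Isotypic (X Y : V) : Prop := Anc X Y ∧ Anc Y X

/-- A vertex is primitive if every ancestor of it is isotypic to it. -/
def Primitive (X : V) : Prop := ∀ B : V, Anc B X → Anc X B

/-- A full evolution for `X` : an evolution from a primitive vertex to `X`. -/
def IsFullEvol (A : ℕ → V) (m : ℕ) (X : V) : Prop :=
  IsEvol A m ∧ Primitive (A 0) ∧ A m = X

/-- The height of a vertex: the least length of a full evolution for it (`⊤` if none). -/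
noncomputable def height (X : V) : ℕ∞ :=
  sInf {n : ℕ∞ | ∃ m : ℕ, n = (m : ℕ∞) ∧ ∃ A : ℕ → V, IsFullEvol A m X}

/-- `A` is a critical ancestor of `B`. -/
def CritAnc (A B : V) : Prop :=
  height A < ⊤ ∧ ∃ (m : ℕ) (E : ℕ → V), 0 < m ∧ IsEvol E m ∧ E 0 = A ∧ E m = B ∧
    height (E 1) = height A + 1

/-- A vertex is normal if any two of its critical ancestors of equal height are isotypic. -/
def NormalVtx (B : V) : Prop :=
  ∀ A A' : V, CritAnc A B → CritAnc A' B → height A = height A' → Isotypic A A'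

/-- The evolution `(A, m)` embeds in the evolution `(B, n)`. -/
def Embeds (A : ℕ → V) (m : ℕ) (B : ℕ → V) (n : ℕ) : Prop :=
  m ≤ n ∧ ∃ r : ℕ → ℕ, (∀ k < m, r k < r (k + 1)) ∧ r m ≤ n ∧
    ∀ k ≤ m, Isotypic (A k) (B (r k))

/-- A universal evolution for `X`: a full evolution for `X` embedding in every
full evolution for `X`. -/
def IsUniversalEvol (A : ℕ → V) (m : ℕ) (X : V) : Prop :=
  IsFullEvol A m X ∧ ∀ (B : ℕ → V) (n : ℕ), IsFullEvol B n X → Embeds A m B n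

/-- A vertex is phylogenetic if it admits a universal evolution. -/
def Phylogenetic (X : V) : Prop := ∃ (A : ℕ → V) (m : ℕ), IsUniversalEvol A m X

/-- A quiver is monotonous if `h(A) ≥ h(B)` for every edge `A → B`. -/
def Monotonous (V : Type u) [Quiver V] : Prop :=
  ∀ A B : V, Nonempty (A ⟶ B) → height B ≤ height A

/-- A vertex `A` is regular if for every descendant `B` of `A` with `h(B) = h(A)`
there is an edge `B → A`. -/
def Regular (A : V) : Prop :=
  ∀ B : V, Anc A B → height B = height A → Nonempty (B ⟶ A)

/-- The clade of a vertex `A`: the full subquiver of descendants of `A`. -/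
abbrev Clade (A : V) : Type u := {B : V // Anc A B}

instance (A : V) : Quiver (Clade A) := ⟨fun X Y => X.val ⟶ Y.val⟩

lemma anc_refl (X : V) : Anc X X :=
  ⟨0, fun _ => X, fun k hk => absurd hk (Nat.not_lt_zero k), rfl, rfl⟩

lemma concat_evol (A : ℕ → V) (m : ℕ) (B : ℕ → V) (n : ℕ) (hA : IsEvol A m) (hB : IsEvol B n)
    (hAB : A m = B 0) :
    ∃ F : ℕ → V, IsEvol F (m + n) ∧ (∀ k ≤ m, F k = A k) ∧ (∀ k, F (m + k) = B k) := by
  refine ⟨fun j => if j < m then A j else B (j - m), ?_, ?_, ?_⟩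
  · intro k hk
    by_cases h1 : k + 1 ≤ m
    · have hkm : k < m := h1
      have e1 : (if k < m then A k else B (k - m)) = A k := if_pos hkm
      by_cases h2 : k + 1 < m
      · simpa [e1, if_pos h2] using hA k hkm
      · have hk1 : k + 1 = m := by omega
        have : (if k + 1 < m then A (k+1) else B (k + 1 - m)) = A (k+1) := by
          rw [if_neg h2]; rw [hk1]; simp [hAB.symm]
        simp only [this, e1]; exact hA k hkm
    · have hmk : m ≤ k := by omega
      have e1 : (if k < m then A k else B (k - m)) = B (k - m) := if_neg (by omega)
      have e2 : (if k + 1 < m then A (k+1) else B (k + 1 - m)) = B ((k - m) + 1) := by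
        rw [if_neg (by omega)]; congr 1; omega
      simp only [e1, e2]; exact hB (k - m) (by omega)
  · intro k hk
    by_cases h : k < m
    · exact if_pos h
    · have : k = m := by omega
      subst this
      show (if k < k then A k else B (k - k)) = A k
      rw [if_neg (by omega)]; simp [hAB.symm]
  · intro k
    show (if m + k < m then A (m + k) else B (m + k - m)) = B k
    rw [if_neg (by omega)]; congr 1; omega

lemma anc_trans {X Y Z : V} (h1 : Anc X Y) (h2 : Anc Y Z) : Anc X Z := by
  obtain ⟨m, A, hA, hA0, hAm⟩ := h1
  obtain ⟨n, B, hB, hB0, hBn⟩ := h2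
  obtain ⟨F, hF, hF1, hF2⟩ := concat_evol A m B n hA hB (hAm.trans hB0.symm)
  exact ⟨m + n, F, hF, (hF1 0 (Nat.zero_le m)).trans hA0, (hF2 n).trans hBn⟩

lemma isotypic_refl (X : V) : Isotypic X X := ⟨anc_refl X, anc_refl X⟩
lemma isotypic_symm {X Y : V} (h : Isotypic X Y) : Isotypic Y X := ⟨h.2, h.1⟩
lemma isotypic_trans {X Y Z : V} (h1 : Isotypic X Y) (h2 : Isotypic Y Z) : Isotypic X Z :=
  ⟨anc_trans h1.1 h2.1, anc_trans h2.2 h1.2⟩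

lemma height_le {X : V} {A : ℕ → V} {m : ℕ} (h : IsFullEvol A m X) : height X ≤ (m : ℕ∞) :=
  sInf_le ⟨m, rfl, A, h⟩

lemma exists_short {X : V} (hfin : ∃ m : ℕ, ∃ A : ℕ → V, IsFullEvol A m X) :
    ∃ (m : ℕ) (A : ℕ → V), IsFullEvol A m X ∧ height X = (m : ℕ∞) := by
  classical
  obtain ⟨A, hA⟩ := Nat.find_spec hfin
  refine ⟨Nat.find hfin, A, hA, le_antisymm (height_le hA) ?_⟩
  refine le_sInf ?_
  rintro b ⟨m', rfl, A', hA'⟩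
  exact_mod_cast Nat.find_min' hfin ⟨A', hA'⟩

lemma exists_full_of_lt_top {X : V} (h : height X < ⊤) :
    ∃ m : ℕ, ∃ A : ℕ → V, IsFullEvol A m X := by
  by_contra hc
  push_neg at hc
  have : {n : ℕ∞ | ∃ m : ℕ, n = (m : ℕ∞) ∧ ∃ A : ℕ → V, IsFullEvol A m X} = ∅ := by
    ext n; simp only [Set.mem_setOf_eq, Set.mem_empty_iff_false, iff_false]
    rintro ⟨m, rfl, A, hA⟩; exact hc m A hA
  rw [height, this, sInf_empty] at h
  exact lt_irrefl _ h

lemma height_mono (hmon : Monotonous V) {A : ℕ → V} {m : ℕ} (hA : IsEvol A m) :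
    ∀ i j, i ≤ j → j ≤ m → height (A i) ≤ height (A j) := by
  intro i j hij hjm
  induction j, hij using Nat.le_induction with
  | base => exact le_refl _
  | succ j hij ih =>
    exact le_trans (ih (by omega)) (hmon _ _ (hA j (by omega)))

lemma height_step {X Y : V} (e : Nonempty (X ⟶ Y)) : height X ≤ height Y + 1 := by
  by_cases hY : height Y < ⊤
  · obtain ⟨m, A, hA, hm⟩ := exists_short (exists_full_of_lt_top hY)
    set A' : ℕ → V := fun j => if j = m + 1 then X else A j with hA'
    have full : IsFullEvol A' (m + 1) X := by
      refine ⟨?_, ?_, if_pos rfl⟩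
      · intro k hk
        by_cases h : k = m
        · have e1 : A' (k + 1) = X := if_pos (by omega)
          have e2 : A' k = Y := by
            have h2 : A' k = A k := if_neg (by omega)
            rw [h2, h]; exact hA.2.2
          rw [e1, e2]; exact e
        · have e1 : A' (k + 1) = A (k + 1) := if_neg (by omega)
          have e2 : A' k = A k := if_neg (by omega)
          rw [e1, e2]; exact hA.1 k (by omega)
      · have : A' 0 = A 0 := if_neg (by omega)
        rw [this]; exact hA.2.1
    calc height X ≤ ((m + 1 : ℕ) : ℕ∞) := height_le full
    _ = height Y + 1 := by rw [hm]; push_cast; ring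
  · have : height Y = ⊤ := by
      rcases lt_or_ge (height Y) ⊤ with h | h
      · exact absurd h hY
      · exact top_unique h
    rw [this]; simp

lemma prefix_full {A : ℕ → V} {m : ℕ} {X : V} (h : IsFullEvol A m X) {k : ℕ} (hk : k ≤ m) :
    IsFullEvol A k (A k) :=
  ⟨fun j hj => h.1 j (by omega), h.2.1, rfl⟩

lemma anc_height_le (hmon : Monotonous V) {X Y : V} (h : Anc X Y) : height X ≤ height Y := by
  obtain ⟨m, C, hC, h0, hm⟩ := h
  have := height_mono hmon hC 0 m (Nat.zero_le m) (le_refl m)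
  rwa [h0, hm] at this

lemma isotypic_height (hmon : Monotonous V) {X Y : V} (h : Isotypic X Y) :
    height X = height Y :=
  le_antisymm (anc_height_le hmon h.1) (anc_height_le hmon h.2)

lemma evol_height_add (hmon : Monotonous V) {A : ℕ → V} {m : ℕ} (hA : IsEvol A m) :
    ∀ k d, k + d ≤ m → height (A (k + d)) ≤ height (A k) + d := by
  intro k d
  induction d with
  | zero => intro _; simp
  | succ d ih =>
    intro h
    have h1 : height (A (k + d + 1)) ≤ height (A (k + d)) + 1 :=
      height_step (hA (k + d) (by omega))
    calc height (A (k + (d + 1))) = height (A (k + d + 1)) := by ring_nf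
    _ ≤ height (A (k + d)) + 1 := h1
    _ ≤ height (A k) + d + 1 := by exact add_le_add (ih (by omega)) le_rfl
    _ = height (A k) + (d + 1 : ℕ) := by push_cast; ring

lemma short_heights (hmon : Monotonous V) {A : ℕ → V} {m : ℕ} {X : V}
    (hfull : IsFullEvol A m X) (hshort : height X = (m : ℕ∞)) :
    ∀ k ≤ m, height (A k) = (k : ℕ∞) := by
  intro k hk
  have hub : height (A k) ≤ (k : ℕ∞) := height_le (prefix_full hfull hk)
  have hfin : height (A k) < ⊤ := lt_of_le_of_lt hub (by exact_mod_cast WithTop.coe_lt_top k)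
  obtain ⟨a, ha⟩ : ∃ a : ℕ, height (A k) = (a : ℕ∞) := by
    rcases (WithTop.lt_top_iff_ne_top.mp hfin) with h
    exact ⟨(height (A k)).toNat, by rw [ENat.coe_toNat h]⟩
  have hmk : (m : ℕ∞) ≤ (a + (m - k) : ℕ) := by
    have h1 := evol_height_add hmon hfull.1 k (m - k) (by omega)
    have h2 : k + (m - k) = m := by omega
    rw [h2, hfull.2.2, hshort, ha] at h1
    exact_mod_cast h1
  have : m ≤ a + (m - k) := by exact_mod_cast hmk
  have hak : k ≤ a := by omega
  rw [ha]
  have : a ≤ k := by exact_mod_cast ha.symm.trans_le hub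
  exact_mod_cast le_antisymm this hak

lemma r_spread {r : ℕ → ℕ} {m : ℕ} (hr : ∀ k < m, r k < r (k + 1)) :
    ∀ i j, i ≤ j → j ≤ m → r i + (j - i) ≤ r j := by
  intro i j hij hjm
  induction j, hij using Nat.le_induction with
  | base => simp
  | succ j hij ih =>
    have := hr j (by omega)
    have := ih (by omega)
    omega

theorem stmt_13 (hmon : Monotonous V) (A B : V) (hB : Phylogenetic B) (hAB : Anc A B) :
    Phylogenetic A := by
  classical
  obtain ⟨U, n, hUfull, hUuniv⟩ := hB
  obtain ⟨p, C, hC, hC0, hCp⟩ := hAB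
  -- n = height B
  have hBn : height B = (n : ℕ∞) := by
    obtain ⟨nB, T', hT'full, hhB⟩ := exists_short ⟨n, U, hUfull⟩
    have h1 : n ≤ nB := (hUuniv T' nB hT'full).1
    have h2 : height B ≤ (n : ℕ∞) := height_le hUfull
    rw [hhB] at h2 ⊢
    have : nB ≤ n := by exact_mod_cast h2
    exact_mod_cast le_antisymm this h1
  have hUk : ∀ k ≤ n, height (U k) = (k : ℕ∞) := short_heights hmon hUfull hBn
  -- height A is finite; short full evolution T for A
  have hAfin : height A < ⊤ := by
    calc height A ≤ height B := anc_height_le hmon ⟨p, C, hC, hC0, hCp⟩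
    _ = (n : ℕ∞) := hBn
    _ < ⊤ := by exact_mod_cast WithTop.coe_lt_top n
  obtain ⟨h, T, hTfull, hhA⟩ := exists_short (exists_full_of_lt_top hAfin)
  have hhn : h ≤ n := by
    have : height A ≤ height B := anc_height_le hmon ⟨p, C, hC, hC0, hCp⟩
    rw [hhA, hBn] at this; exact_mod_cast this
  -- key: for any full evolution E of length q for A, and k < h, U k ∼ E (s k) with s k < q
  have key : ∀ (E : ℕ → V) (q : ℕ), IsFullEvol E q A →
      ∃ s : ℕ → ℕ, (∀ k < h, s k < s (k + 1) ∨ k + 1 = h) ∧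
        (∀ k < h, s k < q ∧ Isotypic (U k) (E (s k))) := by
    intro E q hEfull
    obtain ⟨F, hF, hF1, hF2⟩ := concat_evol E q C p hEfull.1 hC (hEfull.2.2.trans hC0.symm)
    have hFfull : IsFullEvol F (q + p) B := by
      refine ⟨hF, ?_, (hF2 p).trans hCp⟩
      rw [hF1 0 (Nat.zero_le q)]; exact hEfull.2.1
    obtain ⟨hnle, s, hs, hsn, hsiso⟩ := hUuniv F (q + p) hFfull
    have hsq : ∀ k < h, s k < q := by
      intro k hk
      by_contra hge
      push_neg at hge
      have hskb : s k ≤ q + p := by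
        have := r_spread hs k n (by omega) (le_refl n)
        omega
      have h1 : height (F q) ≤ height (F (s k)) :=
        height_mono hmon hF q (s k) hge hskb
      have h2 : height (F q) = height A := by
        rw [hF1 q (le_refl q), hEfull.2.2]
      have h3 : height (F (s k)) = (k : ℕ∞) := by
        rw [← isotypic_height hmon (hsiso k (by omega))]
        exact hUk k (by omega)
      rw [h2, h3, hhA] at h1
      have : h ≤ k := by exact_mod_cast h1
      omega
    refine ⟨s, ?_, ?_⟩
    · intro k hk
      by_cases he : k + 1 = h
      · exact Or.inr he
      · exact Or.inl (hs k (by omega))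
    · intro k hk
      refine ⟨hsq k hk, ?_⟩
      have : F (s k) = E (s k) := hF1 (s k) (le_of_lt (hsq k hk))
      rw [← this]
      exact hsiso k (by omega)
  -- T is universal for A
  refine ⟨T, h, hTfull, ?_⟩
  intro E q hEfull
  -- first relate U k ∼ T k for k < h, using E := T
  obtain ⟨s₀, _, hs₀⟩ := key T h hTfull
  have hUT : ∀ k < h, Isotypic (U k) (T k) := by
    -- show s₀ k = k using that s₀ is strictly increasing with values < h
    -- we need strict increase; re-derive from the embedding directly
    obtain ⟨F, hF, hF1, hF2⟩ := concat_evol T h C p hTfull.1 hC (hTfull.2.2.trans hC0.symm)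
    have hFfull : IsFullEvol F (h + p) B := by
      refine ⟨hF, ?_, (hF2 p).trans hCp⟩
      rw [hF1 0 (Nat.zero_le h)]; exact hTfull.2.1
    obtain ⟨hnle, s, hs, hsn, hsiso⟩ := hUuniv F (h + p) hFfull
    have hsq : ∀ k < h, s k < h := by
      intro k hk
      by_contra hge
      push_neg at hge
      have hskb : s k ≤ h + p := by
        have := r_spread hs k n (by omega) (le_refl n)
        omega
      have h1 : height (F h) ≤ height (F (s k)) :=
        height_mono hmon hF h (s k) hge hskb
      have h2 : height (F h) = height A := by
        rw [hF1 h (le_refl h), hTfull.2.2]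
      have h3 : height (F (s k)) = (k : ℕ∞) := by
        rw [← isotypic_height hmon (hsiso k (by omega))]
        exact hUk k (by omega)
      rw [h2, h3, hhA] at h1
      have : h ≤ k := by exact_mod_cast h1
      omega
    intro k hk
    have hkk : s k = k := by
      have hlow : k ≤ s k := by
        have := r_spread hs 0 k (Nat.zero_le k) (by omega)
        omega
      have hup : s k ≤ k := by
        have := r_spread hs k (h - 1) (by omega) (by omega)
        have := hsq (h - 1) (by omega)
        omega
      omega
    have : F (s k) = T k := by rw [hkk]; exact hF1 k (by omega)
    rw [← this]
    exact hsiso k (by omega)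
  -- now embed T into E
  obtain ⟨s, hsinc, hsprop⟩ := key E q hEfull
  have hq : h ≤ q := by
    have := height_le hEfull
    rw [hhA] at this
    exact_mod_cast this
  refine ⟨hq, fun k => if k < h then s k else q, ?_, ?_, ?_⟩
  · intro k hk
    show (if k < h then s k else q) < (if k + 1 < h then s (k + 1) else q)
    rcases hsinc k hk with h1 | h1
    · rw [if_pos hk]
      by_cases h2 : k + 1 < h
      · rw [if_pos h2]; exact h1
      · rw [if_neg h2]; exact (hsprop k hk).1
    · rw [if_pos hk, if_neg (by omega)]
      exact (hsprop k hk).1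
  · show (if h < h then s h else q) ≤ q
    rw [if_neg (by omega)]
  · intro k hk
    show Isotypic (T k) (E (if k < h then s k else q))
    by_cases h1 : k < h
    · rw [if_pos h1]
      exact isotypic_trans (isotypic_symm (hUT k h1)) (hsprop k h1).2
    · have : k = h := by omega
      subst this
      rw [if_neg (by omega), hTfull.2.2, hEfull.2.2]
      exact isotypic_refl A
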